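/- Let q be an odd prime power with q ≡ 1 (mod 7). Let λ₁ be a multiplicative character of F_q of order 7 and λ₂ the quadratic character, and write J(λ₁,λ₂) = Σ_{i=1}^{7} a_i ζ^i with ζ = e^{2πi/7} and a_i ∈ Z the natural signed counts. Then Σ_{i=1}^{7} a_i² = (6q+1)/7 and Σ_{1≤i<j≤7} a_i a_j = (−3q+3)/7. -/

import Mathlib

open Finset
open Polynomial

lemma lin_indep7 {ζ : ℂ} (hζ : IsPrimitiveRoot ζ 7) (c : ℕ → ℤ)
    (h : ∑ d ∈ range 6, (c d : ℂ) * ζ ^ d = 0) : ∀ d < 6, c d = 0 := by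
  set P : ℚ[X] := ∑ d ∈ range 6, C (c d : ℚ) * X ^ d with hP
  have haev : aeval ζ P = 0 := by
    rw [hP]
    simp only [map_sum, map_mul, aeval_C, map_pow, aeval_X]
    rw [← h]
    rfl
  have hdvd : minpoly ℚ ζ ∣ P := minpoly.dvd ℚ ζ haev
  have hmin : minpoly ℚ ζ = cyclotomic 7 ℚ := (cyclotomic_eq_minpoly_rat hζ (by norm_num)).symm
  have hPz : P = 0 := by
    by_contra hne
    have hdeg : (minpoly ℚ ζ).natDegree ≤ P.natDegree := natDegree_le_of_dvd hdvd hne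
    rw [hmin, natDegree_cyclotomic] at hdeg
    have : P.natDegree ≤ 5 := by
      apply natDegree_sum_le_of_forall_le
      intro d hd
      calc (C ((c d : ℚ)) * X ^ d).natDegree ≤ d := by
            exact natDegree_C_mul_le _ (X ^ d : ℚ[X]) |>.trans (by simp)
        _ ≤ 5 := by simp at hd; omega
    simp [Nat.totient_prime (by norm_num : Nat.Prime 7)] at hdeg
    omega
  intro d hd
  have : P.coeff d = (c d : ℚ) := by
    rw [hP]
    simp [finset_sum_coeff, coeff_C_mul, coeff_X_pow, Finset.sum_ite_eq' (range 6) d]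
    intro hd'; omega
  rw [hPz] at this
  simpa using this.symm

lemma sum_Icc17 {M : Type*} [AddCommMonoid M] (f : ℕ → M) :
    ∑ i ∈ Icc 1 7, f i = f 1 + (f 2 + (f 3 + (f 4 + (f 5 + (f 6 + f 7))))) := by
  rw [show Icc 1 7 = ({1, 2, 3, 4, 5, 6, 7} : Finset ℕ) from by decide]
  rw [Finset.sum_insert (by decide), Finset.sum_insert (by decide), Finset.sum_insert (by decide), Finset.sum_insert (by decide), Finset.sum_insert (by decide), Finset.sum_insert (by decide), Finset.sum_singleton]

lemma sum_Icc27 {M : Type*} [AddCommMonoid M] (f : ℕ → M) :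
    ∑ i ∈ Icc 2 7, f i = f 2 + (f 3 + (f 4 + (f 5 + (f 6 + f 7)))) := by
  rw [show Icc 2 7 = ({2, 3, 4, 5, 6, 7} : Finset ℕ) from by decide]
  rw [Finset.sum_insert (by decide), Finset.sum_insert (by decide), Finset.sum_insert (by decide), Finset.sum_insert (by decide), Finset.sum_insert (by decide), Finset.sum_singleton]

lemma sum_Icc37 {M : Type*} [AddCommMonoid M] (f : ℕ → M) :
    ∑ i ∈ Icc 3 7, f i = f 3 + (f 4 + (f 5 + (f 6 + f 7))) := by
  rw [show Icc 3 7 = ({3, 4, 5, 6, 7} : Finset ℕ) from by decide]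
  rw [Finset.sum_insert (by decide), Finset.sum_insert (by decide), Finset.sum_insert (by decide), Finset.sum_insert (by decide), Finset.sum_singleton]

lemma sum_Icc47 {M : Type*} [AddCommMonoid M] (f : ℕ → M) :
    ∑ i ∈ Icc 4 7, f i = f 4 + (f 5 + (f 6 + f 7)) := by
  rw [show Icc 4 7 = ({4, 5, 6, 7} : Finset ℕ) from by decide]
  rw [Finset.sum_insert (by decide), Finset.sum_insert (by decide), Finset.sum_insert (by decide), Finset.sum_singleton]

lemma sum_Icc57 {M : Type*} [AddCommMonoid M] (f : ℕ → M) :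
    ∑ i ∈ Icc 5 7, f i = f 5 + (f 6 + f 7) := by
  rw [show Icc 5 7 = ({5, 6, 7} : Finset ℕ) from by decide]
  rw [Finset.sum_insert (by decide), Finset.sum_insert (by decide), Finset.sum_singleton]

lemma sum_Icc67 {M : Type*} [AddCommMonoid M] (f : ℕ → M) :
    ∑ i ∈ Icc 6 7, f i = f 6 + f 7 := by
  rw [show Icc 6 7 = ({6, 7} : Finset ℕ) from by decide]
  rw [Finset.sum_insert (by decide), Finset.sum_singleton]

lemma sum_Icc77 {M : Type*} [AddCommMonoid M] (f : ℕ → M) :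
    ∑ i ∈ Icc 7 7, f i = f 7 := by
  rw [show Icc 7 7 = ({7} : Finset ℕ) from by decide]
  rw [Finset.sum_singleton]

lemma sum_Icc87 {M : Type*} [AddCommMonoid M] (f : ℕ → M) :
    ∑ i ∈ Icc 8 7, f i = 0 := by
  rw [show Icc 8 7 = (∅ : Finset ℕ) from by decide, Finset.sum_empty]


/-- For q ≡ 1 (mod 7), with a₁,…,a₇ the signed-count integer coefficients of
J(λ₁,λ₂) = Σ aᵢ ζ^i (λ₁ of order 7, λ₂ quadratic, ζ = e^{2πi/7}), one has
Σ aᵢ² = (6q+1)/7 and Σ_{i<j} aᵢaⱼ = (−3q+3)/7. -/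
theorem stmt_16 (q : ℕ) (hq : Odd q) (hq' : IsPrimePow q) (hq7 : q % 7 = 1)
    (F : Type*) [Field F] [Fintype F] (hF : Fintype.card F = q)
    (χ₁ χ₂ : MulChar F ℂ) (h₁ : orderOf χ₁ = 7) (h₂ : orderOf χ₂ = 2)
    (ζ : ℂ) (hζ : ζ = Complex.exp (2 * Real.pi * Complex.I / 7))
    (a : ℕ → ℤ)
    (ha : ∀ i, a i =
      ({c : F | c ≠ 0 ∧ c ≠ 1 ∧ χ₁ c = ζ ^ i ∧ χ₂ (1 - c) = 1}.ncard : ℤ) -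
      ({c : F | c ≠ 0 ∧ c ≠ 1 ∧ χ₁ c = ζ ^ i ∧ χ₂ (1 - c) = -1}.ncard : ℤ)) :
    (∑ i ∈ Finset.Icc 1 7, (a i : ℚ) ^ 2 = (6 * q + 1) / 7) ∧
      (∑ i ∈ Finset.Icc 1 7, ∑ j ∈ Finset.Icc (i + 1) 7, (a i : ℚ) * (a j : ℚ) =
        (-3 * (q : ℚ) + 3) / 7) := by
  classical
  have hprim : IsPrimitiveRoot ζ 7 := by
    rw [hζ]; exact Complex.isPrimitiveRoot_exp 7 (by norm_num)
  have hζ7 : ζ ^ 7 = 1 := hprim.pow_eq_one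
  have hmod : ∀ n : ℕ, ζ ^ n = ζ ^ (n % 7) := by
    intro n
    conv_lhs => rw [← Nat.div_add_mod n 7]
    rw [pow_add, pow_mul, hζ7, one_pow, one_mul]
  have hχ₁ : χ₁ ≠ 1 := by intro h; rw [h, orderOf_one] at h₁; norm_num at h₁
  have hχ₂ : χ₂ ≠ 1 := by intro h; rw [h, orderOf_one] at h₂; norm_num at h₂
  have hχ₁7 : χ₁ ^ 7 = 1 := by rw [← h₁]; exact pow_orderOf_eq_one χ₁
  have hχ₂2 : χ₂ ^ 2 = 1 := by rw [← h₂]; exact pow_orderOf_eq_one χ₂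
  have hχ₂inv : χ₂⁻¹ = χ₂ := by rw [inv_eq_iff_mul_eq_one, ← sq, hχ₂2]
  have hmul : χ₁ * χ₂ ≠ 1 := by
    intro h
    have : χ₂ = χ₁⁻¹ := by rw [eq_inv_iff_mul_eq_one, mul_comm]; exact h
    rw [this, orderOf_inv, h₁] at h₂; norm_num at h₂
  have hχ₂val : ∀ x : F, x ≠ 0 → χ₂ x = 1 ∨ χ₂ x = -1 := by
    intro x hx
    have h : (χ₂ ^ 2) x = (1 : MulChar F ℂ) x := by rw [hχ₂2]
    rw [MulChar.pow_apply' χ₂ (two_ne_zero) x,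
      MulChar.one_apply (isUnit_iff_ne_zero.mpr hx)] at h
    exact mul_self_eq_one_iff.mp (by rw [← sq]; exact h)
  have hχ₁val : ∀ x : F, x ≠ 0 → ∃ i ∈ Icc 1 7, χ₁ x = ζ ^ i := by
    intro x hx
    have h : (χ₁ x) ^ 7 = 1 := by
      have h : (χ₁ ^ 7) x = (1 : MulChar F ℂ) x := by rw [hχ₁7]
      rwa [MulChar.pow_apply' χ₁ (by norm_num) x,
        MulChar.one_apply (isUnit_iff_ne_zero.mpr hx)] at h
    obtain ⟨i, hi, hix⟩ := hprim.eq_pow_of_pow_eq_one h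
    rcases Nat.eq_zero_or_pos i with h0 | h0
    · exact ⟨7, by simp, by rw [hζ7, ← hix, h0, pow_zero]⟩
    · exact ⟨i, by simp [mem_Icc]; omega, hix.symm⟩
  have hpowinj : ∀ i ∈ Icc 1 7, ∀ j ∈ Icc 1 7, ζ ^ i = ζ ^ j → i = j := by
    intro i hi j hj h
    simp only [mem_Icc] at hi hj
    rw [hmod i, hmod j] at h
    have := hprim.pow_inj (Nat.mod_lt _ (by norm_num)) (Nat.mod_lt _ (by norm_num)) h
    omega
  -- Finsets
  set T : Finset F := univ.filter (fun c : F => c ≠ 0 ∧ c ≠ 1) with hT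
  set S : ℕ → Finset F := fun i => univ.filter (fun c : F => c ≠ 0 ∧ c ≠ 1 ∧ χ₁ c = ζ ^ i)
    with hS
  -- a i as a character sum
  have haC : ∀ i, ((a i : ℂ)) = ∑ c ∈ S i, χ₂ (1 - c) := by
    intro i
    have h1 : {c : F | c ≠ 0 ∧ c ≠ 1 ∧ χ₁ c = ζ ^ i ∧ χ₂ (1 - c) = 1}.ncard
        = ((S i).filter (fun c => χ₂ (1 - c) = 1)).card := by
      rw [← Set.ncard_coe_finset]
      congr 1
      ext c
      simp [hS, and_assoc]
    have h2 : {c : F | c ≠ 0 ∧ c ≠ 1 ∧ χ₁ c = ζ ^ i ∧ χ₂ (1 - c) = -1}.ncard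
        = ((S i).filter (fun c => ¬ χ₂ (1 - c) = 1)).card := by
      rw [← Set.ncard_coe_finset]
      congr 1
      ext c
      simp only [hS, Finset.coe_filter, Set.mem_setOf_eq, mem_filter, mem_univ, true_and]
      constructor
      · rintro ⟨hc0, hc1, hv, hm⟩
        exact ⟨⟨hc0, hc1, hv⟩, by rw [hm]; norm_num⟩
      · rintro ⟨⟨hc0, hc1, hv⟩, hm⟩
        refine ⟨hc0, hc1, hv, ?_⟩
        rcases hχ₂val (1 - c) (sub_ne_zero.mpr (Ne.symm hc1)) with h | h
        · exact absurd h hm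
        · exact h
    have hsplit : ∑ c ∈ S i, χ₂ (1 - c)
        = ∑ c ∈ (S i).filter (fun c => χ₂ (1 - c) = 1), χ₂ (1 - c)
          + ∑ c ∈ (S i).filter (fun c => ¬ χ₂ (1 - c) = 1), χ₂ (1 - c) :=
      (Finset.sum_filter_add_sum_filter_not _ _ _).symm
    have hp : ∑ c ∈ (S i).filter (fun c => χ₂ (1 - c) = 1), χ₂ (1 - c)
        = ((S i).filter (fun c => χ₂ (1 - c) = 1)).card := by
      rw [Finset.sum_congr rfl (fun c hc => (mem_filter.mp hc).2)]
      simp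
    have hm : ∑ c ∈ (S i).filter (fun c => ¬ χ₂ (1 - c) = 1), χ₂ (1 - c)
        = -((S i).filter (fun c => ¬ χ₂ (1 - c) = 1)).card := by
      have : ∀ c ∈ (S i).filter (fun c => ¬ χ₂ (1 - c) = 1), χ₂ (1 - c) = -1 := by
        intro c hc
        rw [mem_filter] at hc
        have hc1 : c ≠ 1 := (mem_filter.mp hc.1).2.2.1
        rcases hχ₂val (1 - c) (sub_ne_zero.mpr (Ne.symm hc1)) with h | h
        · exact absurd h hc.2
        · exact h
      rw [Finset.sum_congr rfl this]
      simp [mul_comm]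
    rw [ha i, hsplit, hp, hm, h1, h2]
    push_cast
    ring
  -- partition of T by the value of χ₁
  have hpart : ∀ f : F → ℂ, ∑ c ∈ T, f c = ∑ i ∈ Icc 1 7, ∑ c ∈ S i, f c := by
    intro f
    have step : ∀ c ∈ T, f c = ∑ i ∈ Icc 1 7, if χ₁ c = ζ ^ i then f c else 0 := by
      intro c hc
      rw [hT, mem_filter] at hc
      obtain ⟨i₀, hi₀, hv⟩ := hχ₁val c hc.2.1
      rw [Finset.sum_eq_single_of_mem i₀ hi₀]
      · rw [if_pos hv]
      · intro j hj hne
        rw [if_neg]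
        intro hvj
        exact hne (hpowinj j hj i₀ hi₀ (by rw [← hvj]; exact hv))
    rw [Finset.sum_congr rfl step, Finset.sum_comm]
    refine Finset.sum_congr rfl fun i _ => ?_
    rw [← Finset.sum_filter]
    refine Finset.sum_congr ?_ fun c _ => rfl
    ext c
    simp [hS, hT, and_assoc]
  -- sum over all of F restricted to T
  have hTrestrict : ∀ f : F → ℂ, f 0 = 0 → f 1 = 0 → ∑ c : F, f c = ∑ c ∈ T, f c := by
    intro f h0 h1
    symm
    apply Finset.sum_subset (Finset.subset_univ T)
    intro c _ hc
    rw [hT, mem_filter] at hc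
    simp only [mem_univ, true_and, not_and_or, not_not] at hc
    rcases hc with h | h
    · rw [h]; exact h0
    · rw [h]; exact h1
  -- J = sum a_i zeta^i
  have hJ : jacobiSum χ₁ χ₂ = ∑ i ∈ Icc 1 7, (a i : ℂ) * ζ ^ i := by
    rw [jacobiSum, hTrestrict _ (by simp [MulChar.map_zero]) (by simp [MulChar.map_zero]), hpart]
    refine Finset.sum_congr rfl fun i _ => ?_
    rw [haC, Finset.sum_mul]
    refine Finset.sum_congr rfl fun c hc => ?_
    have hv : χ₁ c = ζ ^ i := (mem_filter.mp hc).2.2.2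
    rw [hv]; ring
  -- J' = sum a_i zeta^(7-i)
  have hJ' : jacobiSum χ₁⁻¹ χ₂⁻¹ = ∑ i ∈ Icc 1 7, (a i : ℂ) * ζ ^ (7 - i) := by
    rw [hχ₂inv, jacobiSum, hTrestrict _ (by simp [MulChar.map_zero]) (by simp [MulChar.map_zero]),
      hpart]
    refine Finset.sum_congr rfl fun i hi => ?_
    rw [haC, Finset.sum_mul]
    refine Finset.sum_congr rfl fun c hc => ?_
    have hv : χ₁ c = ζ ^ i := (mem_filter.mp hc).2.2.2
    have hi7 : i ≤ 7 := (mem_Icc.mp hi).2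
    have hinv : (ζ ^ i)⁻¹ = ζ ^ (7 - i) := by
      apply inv_eq_of_mul_eq_one_right
      rw [← pow_add, show i + (7 - i) = 7 by omega, hζ7]
    rw [MulChar.inv_apply_eq_inv', hv, hinv]; ring
  -- sum of a_i = -1
  have hsumZ : ∑ i ∈ Icc 1 7, a i = -1 := by
    have hC : ∑ i ∈ Icc 1 7, ((a i : ℂ)) = -1 := by
      have h1 : ∑ i ∈ Icc 1 7, ((a i : ℂ)) = ∑ c ∈ T, χ₂ (1 - c) := by
        rw [hpart]
        exact Finset.sum_congr rfl fun i _ => haC i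
      have h2 : ∑ c : F, χ₂ (1 - c) = 0 := by
        have he := Equiv.sum_comp (Equiv.subLeft (1 : F)) (fun x => χ₂ x)
        simp only [Equiv.subLeft_apply] at he
        rw [he]
        exact MulChar.sum_eq_zero_of_ne_one hχ₂
      have h3 : ∑ c ∈ T, χ₂ (1 - c)
          + ∑ c ∈ univ.filter (fun c : F => ¬(c ≠ 0 ∧ c ≠ 1)), χ₂ (1 - c) = 0 := by
        rw [hT, Finset.sum_filter_add_sum_filter_not]
        exact h2
      have h4 : univ.filter (fun c : F => ¬(c ≠ 0 ∧ c ≠ 1)) = {0, 1} := by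
        ext c
        simp [or_iff_not_imp_left]
      rw [h4] at h3
      rw [Finset.sum_insert (by simp), Finset.sum_singleton] at h3
      simp only [sub_zero, sub_self, MulChar.map_zero, map_one, add_zero] at h3
      rw [h1]
      linear_combination h3
    exact_mod_cast hC
  -- |J|^2 = q
  have hcharF : ringChar ℂ ≠ ringChar F := by
    intro h
    have h0 : ringChar ℂ = 0 := ringChar.eq_zero
    rw [h0] at h
    haveI : CharP F 0 := by rw [h]; exact ringChar.charP F
    haveI : CharZero F := CharP.charP_to_charZero F
    exact (Finite.not_infinite (Finite.of_fintype F))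
      (Infinite.of_injective (Nat.cast : ℕ → F) Nat.cast_injective)
  have hJJ : (∑ i ∈ Icc 1 7, (a i : ℂ) * ζ ^ i) * (∑ j ∈ Icc 1 7, (a j : ℂ) * ζ ^ (7 - j))
      = (q : ℂ) := by
    rw [← hJ, ← hJ', jacobiSum_mul_jacobiSum_inv hcharF hχ₁ hχ₂ hmul, hF]
  -- coefficients b d
  set b : ℕ → ℤ := fun d => ∑ i ∈ Icc 1 7, ∑ j ∈ Icc 1 7,
    if (i + 7 - j) % 7 = d then a i * a j else 0 with hb
  have hbC : (q : ℂ) = ∑ d ∈ range 7, (b d : ℂ) * ζ ^ d := by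
    rw [← hJJ, Finset.sum_mul_sum]
    have step : ∀ i ∈ Icc 1 7, ∀ j ∈ Icc 1 7,
        ((a i : ℂ) * ζ ^ i) * ((a j : ℂ) * ζ ^ (7 - j))
        = ∑ d ∈ range 7, if (i + 7 - j) % 7 = d then (a i : ℂ) * (a j : ℂ) * ζ ^ d else 0 := by
      intro i hi j hj
      rw [Finset.sum_ite_eq (range 7) ((i + 7 - j) % 7) (fun d => (a i : ℂ) * (a j : ℂ) * ζ ^ d)]
      rw [if_pos (Finset.mem_range.mpr (Nat.mod_lt _ (by norm_num)))]
      have hj7 : j ≤ 7 := (mem_Icc.mp hj).2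
      rw [← hmod, show (i + 7 - j) = i + (7 - j) by omega, pow_add]
      ring
    rw [Finset.sum_congr rfl (fun i hi => Finset.sum_congr rfl (fun j hj => step i hi j hj))]
    rw [Finset.sum_congr rfl (fun i _ => Finset.sum_comm), Finset.sum_comm]
    refine Finset.sum_congr rfl fun d _ => ?_
    rw [hb]
    push_cast
    rw [Finset.sum_mul]
    refine Finset.sum_congr rfl fun i _ => ?_
    rw [Finset.sum_mul]
    refine Finset.sum_congr rfl fun j _ => ?_
    split_ifs with h
    · ring
    · ring
  -- b 0 is the sum of squares
  have hb0 : b 0 = ∑ i ∈ Icc 1 7, (a i) ^ 2 := by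
    rw [hb]
    refine Finset.sum_congr rfl fun i hi => ?_
    have hi' := mem_Icc.mp hi
    rw [Finset.sum_eq_single_of_mem i hi]
    · rw [if_pos (by omega), sq]
    · intro j hj hne
      have hj' := mem_Icc.mp hj
      rw [if_neg (by omega)]
  -- sum of all b d
  have hbsum : ∑ d ∈ range 7, b d = 1 := by
    have h1 : ∑ d ∈ range 7, b d = ∑ i ∈ Icc 1 7, ∑ j ∈ Icc 1 7, a i * a j := by
      simp only [hb]
      rw [Finset.sum_comm]
      refine Finset.sum_congr rfl fun i _ => ?_
      rw [Finset.sum_comm]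
      refine Finset.sum_congr rfl fun j _ => ?_
      rw [Finset.sum_ite_eq (range 7) ((i + 7 - j) % 7) (fun _ => a i * a j)]
      rw [if_pos (Finset.mem_range.mpr (Nat.mod_lt _ (by norm_num)))]
    rw [h1, ← Finset.sum_mul_sum, hsumZ]
    norm_num
  -- linear independence: derive relations among the b d
  have hgeom : ∑ d ∈ range 7, ζ ^ d = 0 := hprim.geom_sum_eq_zero (by norm_num)
  set c : ℕ → ℤ := fun d => (if d = 0 then b 0 - q else b d) - b 6 with hc
  have hcsum : ∑ d ∈ range 6, (c d : ℂ) * ζ ^ d = 0 := by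
    have h7 : ∑ d ∈ range 7, (c d : ℂ) * ζ ^ d = 0 := by
      have expand : ∀ d ∈ range 7, (c d : ℂ) * ζ ^ d
          = (b d : ℂ) * ζ ^ d - (if d = 0 then (q : ℂ) else 0) - (b 6 : ℂ) * ζ ^ d := by
        intro d hd
        rcases Nat.eq_zero_or_pos d with h0 | h0
        · subst h0
          simp only [hc, ↓reduceIte]
          push_cast; ring
        · simp only [hc, if_neg (by omega : ¬ d = 0)]
          push_cast; ring
      rw [Finset.sum_congr rfl expand]
      rw [Finset.sum_sub_distrib, Finset.sum_sub_distrib]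
      rw [← hbC, ← Finset.mul_sum, hgeom, mul_zero, sub_zero]
      rw [Finset.sum_ite_eq' (range 7) 0 (fun _ => (q : ℂ))]
      simp
    rw [Finset.sum_range_succ] at h7
    have hc6 : c 6 = 0 := by rw [hc]; simp
    rw [hc6] at h7
    simpa using h7
  have hrel := lin_indep7 hprim c hcsum
  have e0 : b 0 - q = b 6 := by have := hrel 0 (by norm_num); rw [hc] at this; simp at this; linarith
  have e1 : b 1 = b 6 := by have := hrel 1 (by norm_num); rw [hc] at this; simp at this; linarith
  have e2 : b 2 = b 6 := by have := hrel 2 (by norm_num); rw [hc] at this; simp at this; linarith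
  have e3 : b 3 = b 6 := by have := hrel 3 (by norm_num); rw [hc] at this; simp at this; linarith
  have e4 : b 4 = b 6 := by have := hrel 4 (by norm_num); rw [hc] at this; simp at this; linarith
  have e5 : b 5 = b 6 := by have := hrel 5 (by norm_num); rw [hc] at this; simp at this; linarith
  -- conclude 7 * S = 6q + 1
  have hbsum' : b 0 + b 1 + b 2 + b 3 + b 4 + b 5 + b 6 = 1 := by
    have := hbsum
    simp [Finset.sum_range_succ] at this
    linarith
  have key : 7 * (∑ i ∈ Icc 1 7, (a i) ^ 2) = 6 * (q : ℤ) + 1 := by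
    rw [← hb0]; linarith
  -- the pairwise sum identity
  have key2 : 2 * (∑ i ∈ Icc 1 7, ∑ j ∈ Icc (i + 1) 7, a i * a j)
      = 1 - ∑ i ∈ Icc 1 7, (a i) ^ 2 := by
    have hsq : (∑ i ∈ Icc 1 7, a i) ^ 2 = 1 := by rw [hsumZ]; norm_num
    rw [sum_Icc17] at hsq
    rw [sum_Icc17 (fun i => a i ^ 2), sum_Icc17 (fun i => ∑ j ∈ Icc (i + 1) 7, a i * a j)]
    simp only [Nat.reduceAdd]
    simp only [sum_Icc27, sum_Icc37, sum_Icc47, sum_Icc57, sum_Icc67, sum_Icc77, sum_Icc87]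
    linear_combination hsq
  -- conclude
  constructor
  · have keyQ : (7 : ℚ) * (∑ i ∈ Icc 1 7, (a i : ℚ) ^ 2) = 6 * (q : ℚ) + 1 := by
      have := congrArg (fun z : ℤ => (z : ℚ)) key
      push_cast at this
      convert this using 2
    rw [eq_div_iff (by norm_num : (7:ℚ) ≠ 0)]
    linarith
  · have keyQ : (7 : ℚ) * (∑ i ∈ Icc 1 7, (a i : ℚ) ^ 2) = 6 * (q : ℚ) + 1 := by
      have := congrArg (fun z : ℤ => (z : ℚ)) key
      push_cast at this
      convert this using 2
    have key2Q : 2 * (∑ i ∈ Icc 1 7, ∑ j ∈ Icc (i + 1) 7, (a i : ℚ) * (a j : ℚ))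
        = 1 - ∑ i ∈ Icc 1 7, (a i : ℚ) ^ 2 := by
      have := congrArg (fun z : ℤ => (z : ℚ)) key2
      push_cast at this
      convert this using 2
    rw [eq_div_iff (by norm_num : (7:ℚ) ≠ 0)]
    linarith
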